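/- Let k be a circle with center O and radius R and ω a circle with center I and radius r in the Euclidean plane ℝ², with ω strictly inside k (dist(O,I) + r < R). Let ω₁ = (J₁, r₁) and ω₂ = (J₂, r₂) be two distinct circles inscribed in the annulus between ω and k, and let A and B be their respective points of tangency with ω (the unique point on segment I Jᵢ at distance r from I). Then ω, ω₁, ω₂ have two distinct common external tangent lines if and only if A and B are antipodal points of ω (that is, A + B = 2·I) and r₁ · r₂ = r². -/

import Mathlib

open RealInnerProductSpace

noncomputable section

/-- The Euclidean plane. -/
abbrev Pt := EuclideanSpace ℝ (Fin 2)

/-- `L` is a line in the plane. -/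
def IsLine (L : Set Pt) : Prop :=
  ∃ P v : Pt, v ≠ 0 ∧ L = {X | ∃ t : ℝ, X = P + t • v}

/-- The line `L` is tangent to the circle with center `P` and radius `ρ`:
the distance from `P` to `L` equals `ρ`. -/
def TangentTo (L : Set Pt) (P : Pt) (ρ : ℝ) : Prop := Metric.infDist P L = ρ

/-- All points of `S` lie strictly on the same side of the line `L`: there is a unit
normal `u` of `L` and a point `X₀ ∈ L` such that all signed distances `⟪X - X₀, u⟫`
for `X ∈ S` are strictly positive (choosing `-u` covers the other sign). -/
def StrictSameSide (L : Set Pt) (S : Set Pt) : Prop :=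
  ∃ u X₀ : Pt, ‖u‖ = 1 ∧ X₀ ∈ L ∧ (∀ X ∈ L, ∀ Y ∈ L, ⟪X - Y, u⟫ = 0) ∧
    ∀ P ∈ S, 0 < ⟪P - X₀, u⟫

/-- `L` is a common external tangent of the three circles `c₁, c₂, c₃`
(each given as a pair (center, radius)). -/
def IsCommonExternalTangent (L : Set Pt) (c₁ c₂ c₃ : Pt × ℝ) : Prop :=
  IsLine L ∧ TangentTo L c₁.1 c₁.2 ∧ TangentTo L c₂.1 c₂.2 ∧ TangentTo L c₃.1 c₃.2 ∧
    StrictSameSide L {c₁.1, c₂.1, c₃.1}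

/-- Given the outer circle `(O, R)`, the inner circle `(I, r)` and a line `t` tangent to the
inner circle, `(c₁, c₂)` is a `t`-pair: two distinct circles, each externally tangent to
`(I, r)`, internally tangent to `(O, R)`, tangent to `t`, with center strictly on the same
side of `t` as `I`. -/
def TPair (O : Pt) (R : ℝ) (I : Pt) (r : ℝ) (t : Set Pt) (c₁ c₂ : Pt × ℝ) : Prop :=
  c₁ ≠ c₂ ∧ 0 < c₁.2 ∧ 0 < c₂.2 ∧
  dist c₁.1 I = c₁.2 + r ∧ dist c₁.1 O = R - c₁.2 ∧
  dist c₂.1 I = c₂.2 + r ∧ dist c₂.1 O = R - c₂.2 ∧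
  TangentTo t c₁.1 c₁.2 ∧ TangentTo t c₂.1 c₂.2 ∧
  StrictSameSide t {I, c₁.1, c₂.1}

/-- helper point constructor -/
def mk2 (a b : ℝ) : Pt := (WithLp.equiv 2 _).symm ![a, b]

@[simp] lemma mk2_zero (a b : ℝ) : mk2 a b 0 = a := rfl
@[simp] lemma mk2_one (a b : ℝ) : mk2 a b 1 = b := rfl

namespace TTaux

lemma inner2 (x y : Pt) : ⟪x, y⟫ = x 0 * y 0 + x 1 * y 1 := by
  simp [PiLp.inner_apply, Fin.sum_univ_two, RCLike.inner_apply]; ring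

lemma norm2 (x : Pt) : ‖x‖ = Real.sqrt (x 0 ^ 2 + x 1 ^ 2) := by
  rw [EuclideanSpace.norm_eq]; simp [Fin.sum_univ_two]

lemma dist2 (x y : Pt) : dist x y = Real.sqrt ((x 0 - y 0) ^ 2 + (x 1 - y 1) ^ 2) := by
  rw [EuclideanSpace.dist_eq]; simp [Fin.sum_univ_two, Real.dist_eq, sq_abs]

lemma pt_ext (x y : Pt) (h0 : x 0 = y 0) (h1 : x 1 = y 1) : x = y := by
  ext i; fin_cases i <;> assumption

lemma sq_sum_ne (x : Pt) (hx : x ≠ 0) : x 0 ^ 2 + x 1 ^ 2 ≠ 0 := by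
  intro h
  have h0 : x 0 = 0 := by nlinarith [sq_nonneg (x 0), sq_nonneg (x 1)]
  have h1 : x 1 = 0 := by nlinarith [sq_nonneg (x 0), sq_nonneg (x 1)]
  exact hx (pt_ext x 0 (by simp [h0]) (by simp [h1]))

lemma unit_sq (u : Pt) (hu : ‖u‖ = 1) : u 0 ^ 2 + u 1 ^ 2 = 1 := by
  rw [norm2] at hu
  have h0 : (0:ℝ) ≤ u 0 ^ 2 + u 1 ^ 2 := by positivity
  have := Real.sq_sqrt h0
  rw [hu] at this
  linarith

lemma perp_coords (u v : Pt) (hu : ‖u‖ = 1) (huv : ⟪v, u⟫ = 0) :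
    v 0 = -(v 1 * u 0 - v 0 * u 1) * u 1 ∧ v 1 = (v 1 * u 0 - v 0 * u 1) * u 0 := by
  have h1 := unit_sq u hu
  rw [inner2] at huv
  constructor
  · linear_combination u 0 * huv - v 0 * h1
  · linear_combination u 1 * huv - v 1 * h1

lemma infDist_line (P₀ v u Q : Pt) (hv : v ≠ 0) (hu : ‖u‖ = 1) (huv : ⟪v, u⟫ = 0) :
    Metric.infDist Q {X : Pt | ∃ t : ℝ, X = P₀ + t • v} = |⟪Q - P₀, u⟫| := by
  set S : Set Pt := {X : Pt | ∃ t : ℝ, X = P₀ + t • v} with hS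
  have hne : S.Nonempty := ⟨P₀ + (0:ℝ) • v, ⟨0, rfl⟩⟩
  have hlow : ∀ y ∈ S, |⟪Q - P₀, u⟫| ≤ dist Q y := by
    rintro y ⟨t, rfl⟩
    have he : ⟪Q - (P₀ + t • v), u⟫ = ⟪Q - P₀, u⟫ := by
      have hd : Q - (P₀ + t • v) = (Q - P₀) - t • v := by abel
      rw [hd, inner_sub_left, real_inner_smul_left, huv]; ring
    calc |⟪Q - P₀, u⟫| = |⟪Q - (P₀ + t • v), u⟫| := by rw [he]
      _ ≤ ‖Q - (P₀ + t • v)‖ * ‖u‖ := abs_real_inner_le_norm _ _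
      _ = dist Q (P₀ + t • v) := by rw [hu, mul_one, dist_eq_norm]
  have hlow' : |⟪Q - P₀, u⟫| ≤ Metric.infDist Q S := by
    by_contra hc
    rw [not_le, Metric.infDist_lt_iff hne] at hc
    obtain ⟨y, hy, hlt⟩ := hc
    exact absurd (hlow y hy) (not_le.2 hlt)
  obtain ⟨hv0, hv1⟩ := perp_coords u v hu huv
  set lam : ℝ := v 1 * u 0 - v 0 * u 1 with hlamdef
  have hlam : lam ≠ 0 := by
    intro h
    apply hv
    apply pt_ext
    · rw [hv0, h]; simp
    · rw [hv1, h]; simp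
  set t0 : ℝ := ((Q 1 - P₀ 1) * u 0 - (Q 0 - P₀ 0) * u 1) / lam with ht0
  have hmem : P₀ + t0 • v ∈ S := ⟨t0, rfl⟩
  have e0 : t0 * v 0 = -(((Q 1 - P₀ 1) * u 0 - (Q 0 - P₀ 0) * u 1)) * u 1 := by
    rw [hv0, ht0]; field_simp
  have e1 : t0 * v 1 = ((Q 1 - P₀ 1) * u 0 - (Q 0 - P₀ 0) * u 1) * u 0 := by
    rw [hv1, ht0]; field_simp
  have hun := unit_sq u hu
  have hdist : dist Q (P₀ + t0 • v) = |⟪Q - P₀, u⟫| := by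
    rw [dist2, inner2]
    have c0 : (P₀ + t0 • v) 0 = P₀ 0 + t0 * v 0 := by simp
    have c1 : (P₀ + t0 • v) 1 = P₀ 1 + t0 * v 1 := by simp
    have s0 : (Q - P₀) 0 = Q 0 - P₀ 0 := by simp
    have s1 : (Q - P₀) 1 = Q 1 - P₀ 1 := by simp
    rw [c0, c1, s0, s1, ← Real.sqrt_sq_eq_abs]
    congr 1
    rw [show Q 0 - (P₀ 0 + t0 * v 0) = (Q 0 - P₀ 0) - t0 * v 0 by ring,
        show Q 1 - (P₀ 1 + t0 * v 1) = (Q 1 - P₀ 1) - t0 * v 1 by ring, e0, e1]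
    linear_combination (((Q 1 - P₀ 1) * u 0 - (Q 0 - P₀ 0) * u 1) ^ 2
      - (Q 0 - P₀ 0) ^ 2 - (Q 1 - P₀ 1) ^ 2) * hun
  exact le_antisymm (hdist ▸ Metric.infDist_le_dist_of_mem hmem) hlow'

lemma two_perp (u v w : Pt) (hu : u ≠ 0) (hv : v ≠ 0) (h1 : ⟪v, u⟫ = 0) (h2 : ⟪w, u⟫ = 0) :
    ∃ t : ℝ, w = t • v := by
  have hnu : ‖u‖ ≠ 0 := norm_ne_zero_iff.2 hu
  set u' : Pt := ‖u‖⁻¹ • u with hu'def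
  have hu' : ‖u'‖ = 1 := by
    rw [hu'def, norm_smul, norm_inv, norm_norm, inv_mul_cancel₀ hnu]
  have h1' : ⟪v, u'⟫ = 0 := by rw [hu'def, real_inner_smul_right, h1, mul_zero]
  have h2' : ⟪w, u'⟫ = 0 := by rw [hu'def, real_inner_smul_right, h2, mul_zero]
  obtain ⟨hv0, hv1⟩ := perp_coords u' v hu' h1'
  obtain ⟨hw0, hw1⟩ := perp_coords u' w hu' h2'
  set lv : ℝ := v 1 * u' 0 - v 0 * u' 1 with hlv
  set lw : ℝ := w 1 * u' 0 - w 0 * u' 1 with hlw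
  have hlvne : lv ≠ 0 := by
    intro h
    apply hv
    apply pt_ext
    · rw [hv0, h]; simp
    · rw [hv1, h]; simp
  refine ⟨lw / lv, pt_ext _ _ ?_ ?_⟩
  · have : ((lw / lv) • v) 0 = lw / lv * v 0 := by simp
    rw [this, hw0, hv0]; field_simp
  · have : ((lw / lv) • v) 1 = lw / lv * v 1 := by simp
    rw [this, hw1, hv1]; field_simp

lemma dir_perp {L : Set Pt} {P₀ v u : Pt}
    (hLdef : L = {X : Pt | ∃ t : ℝ, X = P₀ + t • v})
    (hperp : ∀ X ∈ L, ∀ Y ∈ L, ⟪X - Y, u⟫ = 0) : ⟪v, u⟫ = 0 := by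
  have h := hperp (P₀ + (1:ℝ) • v) (by rw [hLdef]; exact ⟨1, rfl⟩)
    P₀ (by rw [hLdef]; exact ⟨0, by simp⟩)
  simpa using h

lemma mem_line_base {L : Set Pt} {P₀ v : Pt}
    (hLdef : L = {X : Pt | ∃ t : ℝ, X = P₀ + t • v}) : P₀ ∈ L := by
  rw [hLdef]; exact ⟨0, by simp⟩

lemma signed_tangent {L : Set Pt} {P₀ v : Pt} (hv : v ≠ 0)
    (hLdef : L = {X : Pt | ∃ t : ℝ, X = P₀ + t • v})
    {u X₀ : Pt} (hu : ‖u‖ = 1) (hX₀ : X₀ ∈ L)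
    (hperp : ∀ X ∈ L, ∀ Y ∈ L, ⟪X - Y, u⟫ = 0)
    {P : Pt} {ρ : ℝ} (htan : Metric.infDist P L = ρ) (hpos : 0 < ⟪P - X₀, u⟫) :
    ⟪P - X₀, u⟫ = ρ := by
  have hvu : ⟪v, u⟫ = 0 := dir_perp hLdef hperp
  have h1 : Metric.infDist P L = |⟪P - P₀, u⟫| := by
    rw [hLdef]; exact infDist_line P₀ v u P hv hu hvu
  have h0 : ⟪X₀ - P₀, u⟫ = 0 := hperp X₀ hX₀ P₀ (mem_line_base hLdef)
  have h2 : ⟪P - P₀, u⟫ = ⟪P - X₀, u⟫ := by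
    have hd : P - P₀ = (P - X₀) + (X₀ - P₀) := by abel
    rw [hd, inner_add_left, h0, add_zero]
  rw [h1, h2, abs_of_pos hpos] at htan
  exact htan

lemma line_eq_hyperplane {L : Set Pt} {P₀ v : Pt} (hv : v ≠ 0)
    (hLdef : L = {X : Pt | ∃ t : ℝ, X = P₀ + t • v})
    {u X₀ : Pt} (hu : u ≠ 0) (hX₀ : X₀ ∈ L) (hvu : ⟪v, u⟫ = 0) :
    L = {X : Pt | ⟪X - X₀, u⟫ = 0} := by
  obtain ⟨s, hs⟩ : ∃ s : ℝ, X₀ = P₀ + s • v := by rw [hLdef] at hX₀; exact hX₀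
  ext X
  constructor
  · rintro hX
    obtain ⟨t, rfl⟩ : ∃ t : ℝ, X = P₀ + t • v := by rw [hLdef] at hX; exact hX
    show ⟪(P₀ + t • v) - X₀, u⟫ = 0
    rw [hs]
    have hd : (P₀ + t • v) - (P₀ + s • v) = (t - s) • v := by
      rw [sub_smul]; abel
    rw [hd, real_inner_smul_left, hvu, mul_zero]
  · intro hX
    have hX' : ⟪X - X₀, u⟫ = 0 := hX
    have hXP : ⟪X - P₀, u⟫ = 0 := by
      have hd : X - P₀ = (X - X₀) + (X₀ - P₀) := by abel
      have h0 : ⟪X₀ - P₀, u⟫ = 0 := by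
        rw [hs]
        have : (P₀ + s • v) - P₀ = s • v := by abel
        rw [this, real_inner_smul_left, hvu, mul_zero]
      rw [hd, inner_add_left, hX', h0, add_zero]
    obtain ⟨t, ht⟩ := two_perp u v (X - P₀) hu hv hvu hXP
    rw [hLdef]
    exact ⟨t, by rw [← ht]; abel⟩

end TTaux

namespace TTaux

/-- The candidate tangent line with unit normal `u`, tangent to circle `(I, r)`. -/
def lineOf (I : Pt) (r : ℝ) (u : Pt) : Set Pt :=
  {X : Pt | ∃ t : ℝ, X = (I - r • u) + t • mk2 (-(u 1)) (u 0)}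

lemma construct_tangent (I J₁ J₂ : Pt) (r r₁ r₂ : ℝ) (hr : 0 < r) (hr₁ : 0 < r₁)
    (hr₂ : 0 < r₂) (u : Pt) (hu : ‖u‖ = 1)
    (d1 : ⟪J₁ - I, u⟫ = r₁ - r) (d2 : ⟪J₂ - I, u⟫ = r₂ - r) :
    IsCommonExternalTangent (lineOf I r u) (I, r) (J₁, r₁) (J₂, r₂) := by
  have hu0 : u ≠ 0 := by
    intro h; rw [h, norm_zero] at hu; exact one_ne_zero hu.symm
  set w : Pt := mk2 (-(u 1)) (u 0) with hwdef
  have hw : w ≠ 0 := by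
    intro h
    apply hu0
    apply pt_ext
    · have h1 := congrArg (fun p : Pt => p 1) h
      simpa [hwdef] using h1
    · have h0 := congrArg (fun p : Pt => p 0) h
      simp [hwdef] at h0
      simpa using h0
  have hwu : ⟪w, u⟫ = 0 := by
    rw [inner2]; simp [hwdef]; ring
  set X₀ : Pt := I - r • u with hX₀def
  have huu : ⟪u, u⟫ = (1:ℝ) := by
    rw [real_inner_self_eq_norm_sq, hu]; norm_num
  have key : ∀ Q : Pt, Metric.infDist Q (lineOf I r u) = |⟪Q - X₀, u⟫| := fun Q =>
    infDist_line X₀ w u Q hw hu hwu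
  have sI : ⟪I - X₀, u⟫ = r := by
    rw [show I - X₀ = r • u by rw [hX₀def]; abel, real_inner_smul_left, huu, mul_one]
  have s1 : ⟪J₁ - X₀, u⟫ = r₁ := by
    rw [show J₁ - X₀ = (J₁ - I) + r • u by rw [hX₀def]; abel, inner_add_left, d1,
      real_inner_smul_left, huu]
    ring
  have s2 : ⟪J₂ - X₀, u⟫ = r₂ := by
    rw [show J₂ - X₀ = (J₂ - I) + r • u by rw [hX₀def]; abel, inner_add_left, d2,
      real_inner_smul_left, huu]
    ring
  refine ⟨⟨X₀, w, hw, rfl⟩, ?_, ?_, ?_, u, X₀, hu, ⟨0, by simp [hX₀def]⟩, ?_, ?_⟩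
  · show Metric.infDist I (lineOf I r u) = r
    rw [key, sI, abs_of_pos hr]
  · show Metric.infDist J₁ (lineOf I r u) = r₁
    rw [key, s1, abs_of_pos hr₁]
  · show Metric.infDist J₂ (lineOf I r u) = r₂
    rw [key, s2, abs_of_pos hr₂]
  · rintro X ⟨t, rfl⟩ Y ⟨s, rfl⟩
    rw [show (X₀ + t • w) - (X₀ + s • w) = (t - s) • w by rw [sub_smul]; abel,
      real_inner_smul_left, hwu, mul_zero]
  · intro P hP
    simp only [Set.mem_insert_iff, Set.mem_singleton_iff] at hP
    rcases hP with rfl | rfl | rfl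
    · rw [sI]; exact hr
    · rw [s1]; exact hr₁
    · rw [s2]; exact hr₂

lemma tangent_data {L : Set Pt} {I J₁ J₂ : Pt} {r r₁ r₂ : ℝ}
    (h : IsCommonExternalTangent L (I, r) (J₁, r₁) (J₂, r₂)) :
    ∃ u X₀ : Pt, ‖u‖ = 1 ∧ ⟪I - X₀, u⟫ = r ∧ ⟪J₁ - X₀, u⟫ = r₁ ∧ ⟪J₂ - X₀, u⟫ = r₂ ∧
      L = {X : Pt | ⟪X - X₀, u⟫ = 0} := by
  obtain ⟨⟨P₀, v, hv, hLdef⟩, htI, ht1, ht2, u, X₀, hu, hX₀, hperp, hpos⟩ := h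
  have hu0 : u ≠ 0 := by
    intro h'; rw [h', norm_zero] at hu; exact one_ne_zero hu.symm
  refine ⟨u, X₀, hu, ?_, ?_, ?_, ?_⟩
  · exact signed_tangent hv hLdef hu hX₀ hperp htI (hpos I (by simp))
  · exact signed_tangent hv hLdef hu hX₀ hperp ht1 (hpos J₁ (by simp))
  · exact signed_tangent hv hLdef hu hX₀ hperp ht2 (hpos J₂ (by simp))
  · exact line_eq_hyperplane hv hLdef hu0 hX₀ (dir_perp hLdef hperp)

end TTaux

/-- **Characterization of triples with two common external tangents.**
Two distinct circles `ω₁ = (J₁, r₁)`, `ω₂ = (J₂, r₂)` inscribed in the annulus between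
`ω = (I, r)` and `k = (O, R)`, with tangency points `A`, `B` on `ω`, are such that
`ω, ω₁, ω₂` have two distinct common external tangents if and only if `A` and `B` are
antipodal on `ω` and `r₁ * r₂ = r ^ 2`. -/
theorem two_tangents_iff_antipodal_and_product
    (O I : Pt) (R r : ℝ) (hr : 0 < r) (hR : 0 < R)
    (hinside : dist O I + r < R)
    (J₁ J₂ : Pt) (r₁ r₂ : ℝ) (hr₁ : 0 < r₁) (hr₂ : 0 < r₂)
    (hne : (J₁, r₁) ≠ (J₂, r₂))
    (h₁I : dist J₁ I = r₁ + r) (h₁O : dist J₁ O = R - r₁)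
    (h₂I : dist J₂ I = r₂ + r) (h₂O : dist J₂ O = R - r₂)
    (A B : Pt)
    (hA : A = I + (r / (r + r₁)) • (J₁ - I))
    (hB : B = I + (r / (r + r₂)) • (J₂ - I)) :
    (∃ u₁ u₂ : Set Pt, u₁ ≠ u₂ ∧
      IsCommonExternalTangent u₁ (I, r) (J₁, r₁) (J₂, r₂) ∧
      IsCommonExternalTangent u₂ (I, r) (J₁, r₁) (J₂, r₂)) ↔
    (A + B = (2 : ℝ) • I ∧ r₁ * r₂ = r ^ 2) := by
  have hs1 : (0:ℝ) < r + r₁ := by linarith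
  have hs2 : (0:ℝ) < r + r₂ := by linarith
  have hv1ne : J₁ - I ≠ 0 := by
    intro h
    have : dist J₁ I = 0 := by rw [dist_eq_norm, h, norm_zero]
    rw [h₁I] at this; linarith
  constructor
  · -- forward direction
    rintro ⟨L, L', hLL', hc, hc'⟩
    obtain ⟨u, X₀, hu, sI, s1, s2, hLrep⟩ := TTaux.tangent_data hc
    obtain ⟨u', X₀', hu', sI', s1', s2', hLrep'⟩ := TTaux.tangent_data hc'
    -- the two unit normals are distinct
    have huu' : u ≠ u' := by
      intro h
      subst h
      apply hLL'
      have hXX : ⟪X₀ - X₀', u⟫ = 0 := by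
        have hd : X₀ - X₀' = (I - X₀') - (I - X₀) := by abel
        rw [hd, inner_sub_left, sI, sI', sub_self]
      rw [hLrep, hLrep']
      ext X
      simp only [Set.mem_setOf_eq]
      have hk : ⟪X - X₀', u⟫ = ⟪X - X₀, u⟫ := by
        have hd : X - X₀' = (X - X₀) + (X₀ - X₀') := by abel
        rw [hd, inner_add_left, hXX, add_zero]
      rw [hk]
    have hd : u - u' ≠ 0 := sub_ne_zero.2 huu'
    have j1 : ⟪J₁ - I, u⟫ = r₁ - r := by
      have hdd : J₁ - I = (J₁ - X₀) - (I - X₀) := by abel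
      rw [hdd, inner_sub_left, s1, sI]
    have j2 : ⟪J₂ - I, u⟫ = r₂ - r := by
      have hdd : J₂ - I = (J₂ - X₀) - (I - X₀) := by abel
      rw [hdd, inner_sub_left, s2, sI]
    have j1' : ⟪J₁ - I, u'⟫ = r₁ - r := by
      have hdd : J₁ - I = (J₁ - X₀') - (I - X₀') := by abel
      rw [hdd, inner_sub_left, s1', sI']
    have j2' : ⟪J₂ - I, u'⟫ = r₂ - r := by
      have hdd : J₂ - I = (J₂ - X₀') - (I - X₀') := by abel
      rw [hdd, inner_sub_left, s2', sI']
    have p1 : ⟪J₁ - I, u - u'⟫ = 0 := by rw [inner_sub_right, j1, j1', sub_self]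
    have p2 : ⟪J₂ - I, u - u'⟫ = 0 := by rw [inner_sub_right, j2, j2', sub_self]
    obtain ⟨lam, hlam⟩ := TTaux.two_perp (u - u') (J₁ - I) (J₂ - I) hd hv1ne p1 p2
    have hn1 : ‖J₁ - I‖ = r₁ + r := by rw [← dist_eq_norm, h₁I]
    have hn2 : r₂ + r = |lam| * (r₁ + r) := by
      rw [← h₂I, dist_eq_norm, hlam, norm_smul, Real.norm_eq_abs, hn1]
    have hl2 : r₂ - r = lam * (r₁ - r) := by
      rw [← j2, hlam, real_inner_smul_left, j1]
    rcases le_or_gt 0 lam with hpos | hneg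
    · exfalso
      rw [abs_of_nonneg hpos] at hn2
      have hlam1 : lam = 1 := by
        have h2r : 2 * r * (lam - 1) = 0 := by linear_combination hl2 - hn2
        rcases mul_eq_zero.1 h2r with h | h
        · linarith
        · linarith
      have hr12 : r₁ = r₂ := by
        rw [hlam1] at hn2; linarith
      have hJ12 : J₁ = J₂ := by
        have : J₂ - I = J₁ - I := by rw [hlam, hlam1, one_smul]
        have := sub_left_injective this
        exact this.symm
      exact hne (by rw [hJ12, hr12])
    · rw [abs_of_neg hneg] at hn2
      -- hn2 : r₂ + r = -lam * (r₁ + r)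
      have hprod : r₁ * r₂ = r ^ 2 := by
        linear_combination ((r₁ - r)/2) * hn2 + ((r₁ + r)/2) * hl2
      refine ⟨?_, hprod⟩
      have hlr : lam * r₁ = -r := by linear_combination (hn2 - hl2)/2
      have hl2' : lam * r = -r₂ := by
        have h0 : r₁ * (lam * r + r₂) = 0 := by
          linear_combination r * hlr + hprod
        rcases mul_eq_zero.1 h0 with h | h
        · linarith
        · linarith
      have hc0 : (r / (r + r₂)) * lam = -(r / (r + r₁)) := by
        field_simp
        linear_combination hl2' + hlr
      rw [hA, hB, hlam, smul_smul, hc0]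
      module
  · -- backward direction
    rintro ⟨hAB, hprod⟩
    obtain ⟨a, hadef⟩ : ∃ a : ℝ, a = (r₁ - r) / (r + r₁) := ⟨_, rfl⟩
    have ha2 : a ^ 2 < 1 := by
      rw [hadef, div_pow, div_lt_one (by positivity)]
      nlinarith
    obtain ⟨b, hbdef⟩ : ∃ b : ℝ, b = Real.sqrt (1 - a ^ 2) := ⟨_, rfl⟩
    have hb : 0 < b := hbdef ▸ Real.sqrt_pos.2 (by linarith)
    have hb2 : b ^ 2 = 1 - a ^ 2 := hbdef ▸ Real.sq_sqrt (by linarith)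
    obtain ⟨e0, he0def⟩ : ∃ x : ℝ, x = (J₁ 0 - I 0) / (r + r₁) := ⟨_, rfl⟩
    obtain ⟨e1, he1def⟩ : ∃ x : ℝ, x = (J₁ 1 - I 1) / (r + r₁) := ⟨_, rfl⟩
    have hsq : (J₁ 0 - I 0) ^ 2 + (J₁ 1 - I 1) ^ 2 = (r₁ + r) ^ 2 := by
      have h := h₁I
      rw [TTaux.dist2] at h
      have h0 : (0:ℝ) ≤ (J₁ 0 - I 0) ^ 2 + (J₁ 1 - I 1) ^ 2 := by positivity
      have := Real.sq_sqrt h0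
      rw [h] at this
      linarith
    have he : e0 ^ 2 + e1 ^ 2 = 1 := by
      rw [he0def, he1def]
      field_simp
      linear_combination hsq
    -- antipodality gives v₂ = -((r+r₂)/(r+r₁)) • v₁
    have h0 : (r / (r + r₁)) • (J₁ - I) + (r / (r + r₂)) • (J₂ - I) = 0 := by
      have h := hAB
      rw [hA, hB] at h
      calc (r / (r + r₁)) • (J₁ - I) + (r / (r + r₂)) • (J₂ - I)
          = (I + (r / (r + r₁)) • (J₁ - I)) + (I + (r / (r + r₂)) • (J₂ - I))
            - (2:ℝ) • I := by module
        _ = 0 := by rw [h]; simp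
    have hv2 : J₂ - I = (-((r + r₂) / (r + r₁))) • (J₁ - I) := by
      have h1 : ((r + r₂) / r) • ((r / (r + r₁)) • (J₁ - I) + (r / (r + r₂)) • (J₂ - I))
          = ((r + r₂) / r) • (0 : Pt) := by rw [h0]
      rw [smul_add, smul_smul, smul_smul, smul_zero] at h1
      have e1' : (r + r₂) / r * (r / (r + r₁)) = (r + r₂) / (r + r₁) := by
        field_simp
      have e2' : (r + r₂) / r * (r / (r + r₂)) = 1 := by
        field_simp
      rw [e1', e2', one_smul] at h1
      rw [add_comm] at h1
      have h2 : J₂ - I = -(((r + r₂) / (r + r₁)) • (J₁ - I)) :=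
        eq_neg_of_add_eq_zero_left h1
      rw [h2, neg_smul]
    -- coordinates of v₁
    have hc0 : J₁ 0 - I 0 = (r + r₁) * e0 := by rw [he0def]; field_simp
    have hc1 : J₁ 1 - I 1 = (r + r₁) * e1 := by rw [he1def]; field_simp
    obtain ⟨up, hupdef⟩ : ∃ x : Pt, x = mk2 (a * e0 - b * e1) (a * e1 + b * e0) := ⟨_, rfl⟩
    obtain ⟨um, humdef⟩ : ∃ x : Pt, x = mk2 (a * e0 + b * e1) (a * e1 - b * e0) := ⟨_, rfl⟩
    have hup0 : up 0 = a * e0 - b * e1 := by rw [hupdef]; exact mk2_zero _ _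
    have hup1 : up 1 = a * e1 + b * e0 := by rw [hupdef]; exact mk2_one _ _
    have hum0 : um 0 = a * e0 + b * e1 := by rw [humdef]; exact mk2_zero _ _
    have hum1 : um 1 = a * e1 - b * e0 := by rw [humdef]; exact mk2_one _ _
    have hnup : ‖up‖ = 1 := by
      rw [TTaux.norm2, hup0, hup1]
      rw [show (a * e0 - b * e1) ^ 2 + (a * e1 + b * e0) ^ 2 = 1 by
        linear_combination (a ^ 2 + b ^ 2) * he + hb2]
      exact Real.sqrt_one
    have hnum : ‖um‖ = 1 := by
      rw [TTaux.norm2, hum0, hum1]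
      rw [show (a * e0 + b * e1) ^ 2 + (a * e1 - b * e0) ^ 2 = 1 by
        linear_combination (a ^ 2 + b ^ 2) * he + hb2]
      exact Real.sqrt_one
    have hsub0 : (J₁ - I) 0 = J₁ 0 - I 0 := by simp
    have hsub1 : (J₁ - I) 1 = J₁ 1 - I 1 := by simp
    have hia : (r + r₁) * a = r₁ - r := by rw [hadef]; field_simp
    have d1p : ⟪J₁ - I, up⟫ = r₁ - r := by
      rw [TTaux.inner2, hsub0, hsub1, hc0, hc1,
        hup0, hup1]
      linear_combination ((r + r₁) * a) * he + hia
    have d1m : ⟪J₁ - I, um⟫ = r₁ - r := by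
      rw [TTaux.inner2, hsub0, hsub1, hc0, hc1,
        hum0, hum1]
      linear_combination ((r + r₁) * a) * he + hia
    have hmu : -((r + r₂) / (r + r₁)) * (r₁ - r) = r₂ - r := by
      field_simp
      linear_combination (-2) * hprod
    have d2p : ⟪J₂ - I, up⟫ = r₂ - r := by
      rw [hv2, real_inner_smul_left, d1p, hmu]
    have d2m : ⟪J₂ - I, um⟫ = r₂ - r := by
      rw [hv2, real_inner_smul_left, d1m, hmu]
    refine ⟨TTaux.lineOf I r up, TTaux.lineOf I r um, ?_,
      TTaux.construct_tangent I J₁ J₂ r r₁ r₂ hr hr₁ hr₂ up hnup d1p d2p,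
      TTaux.construct_tangent I J₁ J₂ r r₁ r₂ hr hr₁ hr₂ um hnum d1m d2m⟩
    -- the two lines are distinct
    intro hEq
    have hmem : (I - r • up) ∈ TTaux.lineOf I r up := ⟨0, by simp⟩
    rw [hEq] at hmem
    obtain ⟨t, ht⟩ := hmem
    have hinner : ⟪(I - r • up) - (I - r • um), um⟫
        = t * ⟪mk2 (-(um 1)) (um 0), um⟫ := by
      rw [show (I - r • up) - (I - r • um)
          = (t : ℝ) • mk2 (-(um 1)) (um 0) by
        rw [show (I - r • up) = (I - r • um) + t • mk2 (-(um 1)) (um 0) from ht]; abel,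
        real_inner_smul_left]
    have hperp : ⟪mk2 (-(um 1)) (um 0), um⟫ = 0 := by
      rw [TTaux.inner2]; simp; ring
    rw [hperp, mul_zero] at hinner
    have hval : ⟪(I - r • up) - (I - r • um), um⟫ = r * (2 * b ^ 2) := by
      have hd : (I - r • up) - (I - r • um) = r • (um - up) := by
        rw [smul_sub]; abel
      rw [hd, real_inner_smul_left, TTaux.inner2]
      rw [show (um - up) 0 = um 0 - up 0 by simp, show (um - up) 1 = um 1 - up 1 by simp,
        hum0, hum1, hup0, hup1]
      linear_combination (r * 2 * b ^ 2) * he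
    rw [hval] at hinner
    have hgt : (0:ℝ) < r * (2 * b ^ 2) := by positivity
    exact ne_of_gt hgt hinner
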